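/- Let α and k be complex numbers with α ≠ 0, α + k ≠ 0, k+2 not a nonpositive integer, and |k/(α+k)| < 1. Then the convergent series ∑_{n=0}^∞ [(α+k+1)_n (2)_n / ((k+2)_n · n!)] · (k/(α+k))^n equals (α+k)(k+1)/α. -/

import Mathlib

open Filter Topology

noncomputable def gosperT (α k : ℂ) (n : ℕ) : ℂ :=
  (ascPochhammer ℂ n).eval (α + k + 1) * (ascPochhammer ℂ n).eval 2 /
    ((ascPochhammer ℂ n).eval (k + 2) * (n.factorial : ℂ)) * (k / (α + k)) ^ n

noncomputable def gosperU (α k : ℂ) (n : ℕ) : ℂ :=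
  (α + k) * (k + 1 + n) * (ascPochhammer ℂ n).eval (α + k + 1) /
    (ascPochhammer ℂ n).eval (k + 2) * (k / (α + k)) ^ n / α

lemma gosper_poch_two (n : ℕ) : (ascPochhammer ℂ n).eval 2 = ((n+1).factorial : ℂ) := by
  induction n with
  | zero => simp [ascPochhammer_zero]
  | succ n ih =>
      rw [ascPochhammer_succ_eval, ih]
      have h : (n + 1 + 1).factorial = (n+1).factorial * (n+2) := by
        rw [Nat.factorial_succ]; ring
      rw [h]
      push_cast
      ring

lemma gosper_poch_ne (c : ℂ) (h : ∀ m : ℕ, c + m ≠ 0) (n : ℕ) :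
    (ascPochhammer ℂ n).eval c ≠ 0 := by
  induction n with
  | zero => simp [ascPochhammer_zero]
  | succ n ih =>
      rw [ascPochhammer_succ_eval]
      exact mul_ne_zero ih (h n)

lemma gosper_tendsto_ratio (z w : ℂ) :
    Tendsto (fun n : ℕ => (z + n) / (w + n)) atTop (𝓝 1) := by
  have hnorm : Tendsto (fun n : ℕ => ‖(w + n : ℂ)‖) atTop atTop := by
    apply tendsto_atTop_mono' atTop
      (show ∀ᶠ n : ℕ in atTop, (n : ℝ) - ‖w‖ ≤ ‖(w + n : ℂ)‖ from ?_)
    · exact tendsto_atTop_add_const_right _ _ tendsto_natCast_atTop_atTop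
    · filter_upwards with n
      have h1 := norm_le_norm_add_norm_sub' ((n:ℂ)) (-w)
      have : ‖((n:ℂ))‖ - ‖w‖ ≤ ‖w + n‖ := by
        have h3 : ‖((n:ℂ))‖ ≤ ‖w + n‖ + ‖w‖ := by
          calc ‖((n:ℂ))‖ = ‖(w + n) + (-w)‖ := by ring_nf
            _ ≤ ‖w + (n:ℂ)‖ + ‖w‖ := by
                refine (norm_add_le _ _).trans ?_
                simp
        linarith
      simpa using this
  have hinv : Tendsto (fun n : ℕ => ((w + n : ℂ))⁻¹) atTop (𝓝 0) := by
    rw [tendsto_zero_iff_norm_tendsto_zero]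
    simp only [norm_inv]; exact hnorm.inv_tendsto_atTop
  have h0 : Tendsto (fun n : ℕ => 1 + (z - w) * (w + n : ℂ)⁻¹) atTop (𝓝 1) := by
    have := (tendsto_const_nhds (x := (z - w)) (f := atTop (α := ℕ))).mul hinv
    simpa using (tendsto_const_nhds (x := (1:ℂ)) (f := atTop (α := ℕ))).add this
  apply h0.congr'
  have hne : ∀ᶠ n : ℕ in atTop, (w + n : ℂ) ≠ 0 := by
    filter_upwards [hnorm.eventually_gt_atTop 0] with n hn
    exact fun h => by simp [h] at hn
  filter_upwards [hne] with n hn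
  field_simp
  ring

section Main
variable (α k : ℂ)

lemma gosper_hc (hk : ∀ m : ℕ, k + 2 ≠ -(m : ℂ)) (m : ℕ) : (k + 2) + (m : ℂ) ≠ 0 := by
  intro h
  exact hk m (by linear_combination h)

lemma gosper_Rq (a c : ℂ) (n : ℕ) :
    (ascPochhammer ℂ (n+1)).eval a / (ascPochhammer ℂ (n+1)).eval c =
      ((ascPochhammer ℂ n).eval a / (ascPochhammer ℂ n).eval c) * ((a + n) / (c + n)) := by
  rw [ascPochhammer_succ_eval, ascPochhammer_succ_eval, mul_div_mul_comm]

lemma gosperT_eq (hk : ∀ m : ℕ, k + 2 ≠ -(m : ℂ)) (n : ℕ) :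
    gosperT α k n = ((n : ℂ) + 1) *
      ((ascPochhammer ℂ n).eval (α + k + 1) / (ascPochhammer ℂ n).eval (k + 2)) *
      (k / (α + k)) ^ n := by
  have hpc := gosper_poch_ne (k+2) (gosper_hc k hk) n
  have hfac : ((n.factorial : ℂ)) ≠ 0 := Nat.cast_ne_zero.mpr n.factorial_ne_zero
  unfold gosperT
  rw [gosper_poch_two]
  have h : (((n+1).factorial : ℕ) : ℂ) = ((n:ℂ)+1) * (n.factorial : ℂ) := by
    rw [Nat.factorial_succ]; push_cast; ring
  rw [h]
  generalize (k / (α + k)) ^ n = y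
  field_simp

lemma gosperU_eq (n : ℕ) :
    gosperU α k n = (α + k) * (k + 1 + n) / α *
      ((ascPochhammer ℂ n).eval (α + k + 1) / (ascPochhammer ℂ n).eval (k + 2)) *
      (k / (α + k)) ^ n := by
  unfold gosperU
  ring

lemma gosperT_succ (hαk : α + k ≠ 0) (hk : ∀ m : ℕ, k + 2 ≠ -(m : ℂ)) (n : ℕ) :
    gosperT α k (n+1) = gosperT α k n *
      (k / (α + k) * ((α + k + 1 + n) / (k + 2 + n)) * ((2 + n) / (1 + n))) := by
  have h1n : ((1:ℂ) + n) ≠ 0 := by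
    have : ((n+1 : ℕ) : ℂ) ≠ 0 := Nat.cast_ne_zero.mpr n.succ_ne_zero
    push_cast at this
    intro h; exact this (by linear_combination h)
  rw [gosperT_eq α k hk (n+1), gosperT_eq α k hk n, gosper_Rq, pow_succ]
  push_cast
  generalize (ascPochhammer ℂ n).eval (α + k + 1) / (ascPochhammer ℂ n).eval (k + 2) = R
  generalize (α + k + 1 + (n:ℂ)) / (k + 2 + (n:ℂ)) = q
  generalize (k / (α + k)) ^ n = y
  generalize k / (α + k) = x
  field_simp
  ring

lemma gosperU_succ (hα : α ≠ 0) (hαk : α + k ≠ 0) (hk : ∀ m : ℕ, k + 2 ≠ -(m : ℂ)) (n : ℕ)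
    (hn : (k + 1 + (n:ℂ)) ≠ 0) :
    gosperU α k (n+1) = gosperU α k n *
      (k / (α + k) * ((α + k + 1 + n) / (k + 2 + n)) * ((k + 2 + (n:ℂ)) / (k + 1 + n))) := by
  rw [gosperU_eq, gosperU_eq, gosper_Rq, pow_succ]
  push_cast
  generalize (ascPochhammer ℂ n).eval (α + k + 1) / (ascPochhammer ℂ n).eval (k + 2) = R
  generalize (α + k + 1 + (n:ℂ)) / (k + 2 + (n:ℂ)) = q
  generalize (k / (α + k)) ^ n = y
  generalize k / (α + k) = x
  field_simp
  ring

lemma gosper_telescope (hα : α ≠ 0) (hαk : α + k ≠ 0) (hk : ∀ m : ℕ, k + 2 ≠ -(m : ℂ)) (n : ℕ) :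
    gosperT α k n = gosperU α k n - gosperU α k (n+1) := by
  have hcn := gosper_hc k hk n
  rw [gosperT_eq α k hk n, gosperU_eq, gosperU_eq, gosper_Rq, pow_succ]
  push_cast
  generalize (ascPochhammer ℂ n).eval (α + k + 1) / (ascPochhammer ℂ n).eval (k + 2) = R
  generalize (k / (α + k)) ^ n = y
  field_simp
  ring

end Main


/-- Gosper's strange evaluation:
`₂F₁(α+k+1, 2; k+2; k/(α+k)) = (α+k)(k+1)/α` in the region of absolute convergence. -/
theorem gosper_strange_eval (α k : ℂ) (hα : α ≠ 0) (hαk : α + k ≠ 0)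
    (hk : ∀ m : ℕ, k + 2 ≠ -(m : ℂ)) (hx : ‖k / (α + k)‖ < 1) :
    ∑' n : ℕ, ((ascPochhammer ℂ n).eval (α + k + 1) * (ascPochhammer ℂ n).eval 2 /
        ((ascPochhammer ℂ n).eval (k + 2) * (n.factorial : ℂ))) * (k / (α + k)) ^ n
    = (α + k) * (k + 1) / α := by
  have hc := gosper_hc k hk
  have hxn : ‖k / (α + k)‖ < 1 := by exact hx
  set x : ℂ := k / (α + k) with hxdef
  set r : ℝ := (‖x‖ + 1) / 2 with hrdef
  have hr1 : r < 1 := by rw [hrdef]; linarith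
  have hxr : ‖x‖ < r := by rw [hrdef]; linarith [norm_nonneg x]
  -- Summability of T
  have hfacT : Tendsto
      (fun n : ℕ => ‖x * ((α+k+1+n)/(k+2+n)) * (((2:ℂ)+n)/((1:ℂ)+n))‖) atTop (𝓝 ‖x‖) := by
    have h := ((tendsto_const_nhds (x := x) (f := atTop (α := ℕ))).mul
      (gosper_tendsto_ratio (α+k+1) (k+2))).mul (gosper_tendsto_ratio 2 1)
    simpa using h.norm
  have hT : Summable (gosperT α k) := by
    apply summable_of_ratio_norm_eventually_le hr1
    filter_upwards [hfacT.eventually_lt_const hxr] with n hn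
    rw [gosperT_succ α k hαk hk n, norm_mul, mul_comm]
    exact mul_le_mul_of_nonneg_right hn.le (norm_nonneg _)
  -- Summability of U
  have hkn : ∀ n : ℕ, 1 ≤ n → (k + 1 + (n:ℂ)) ≠ 0 := by
    intro n hn
    obtain ⟨m, rfl⟩ := Nat.exists_eq_add_of_le hn
    push_cast
    intro h
    exact hc m (by linear_combination h)
  have hfacU : Tendsto
      (fun n : ℕ => ‖x * ((α+k+1+n)/(k+2+n)) * ((k+2+(n:ℂ))/(k+1+n))‖) atTop (𝓝 ‖x‖) := by
    have h := ((tendsto_const_nhds (x := x) (f := atTop (α := ℕ))).mul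
      (gosper_tendsto_ratio (α+k+1) (k+2))).mul (gosper_tendsto_ratio (k+2) (k+1))
    simpa using h.norm
  have hU : Summable (gosperU α k) := by
    apply summable_of_ratio_norm_eventually_le hr1
    filter_upwards [hfacU.eventually_lt_const hxr, eventually_ge_atTop 1] with n hn hn1
    rw [gosperU_succ α k hα hαk hk n (hkn n hn1), norm_mul, mul_comm]
    exact mul_le_mul_of_nonneg_right hn.le (norm_nonneg _)
  have hU0 : Tendsto (gosperU α k) atTop (𝓝 0) := hU.tendsto_atTop_zero
  -- partial sums telescope
  have hps : ∀ N : ℕ, ∑ i ∈ Finset.range N, gosperT α k i = gosperU α k 0 - gosperU α k N := by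
    intro N
    calc ∑ i ∈ Finset.range N, gosperT α k i
        = ∑ i ∈ Finset.range N, (gosperU α k i - gosperU α k (i+1)) :=
          Finset.sum_congr rfl fun i _ => gosper_telescope α k hα hαk hk i
      _ = gosperU α k 0 - gosperU α k N := Finset.sum_range_sub' _ _
  have h2 := hT.hasSum.tendsto_sum_nat
  have h3 : Tendsto (fun N => gosperU α k 0 - gosperU α k N) atTop (𝓝 (gosperU α k 0 - 0)) :=
    tendsto_const_nhds.sub hU0
  have hkey : ∑' n, gosperT α k n = gosperU α k 0 - 0 :=
    tendsto_nhds_unique (h2.congr hps) h3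
  have hu0 : gosperU α k 0 = (α + k) * (k + 1) / α := by
    unfold gosperU
    simp [ascPochhammer_zero]
  calc ∑' n : ℕ, ((ascPochhammer ℂ n).eval (α + k + 1) * (ascPochhammer ℂ n).eval 2 /
        ((ascPochhammer ℂ n).eval (k + 2) * (n.factorial : ℂ))) * (k / (α + k)) ^ n
      = ∑' n, gosperT α k n := rfl
    _ = (α + k) * (k + 1) / α := by rw [hkey, hu0, sub_zero]
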